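/- Let G be a locally compact, second countable, Hausdorff topological group, let Λ ⊆ G be a closed subset with finite local complexity, and let P, Q ∈ Ω₀(Λ) with P ≠ Q. Then there exist a compact set K ⊆ G, a finite set F ⊆ G, and h ∈ G such that K ∩ P = hF, while K ∩ Q ≠ h'F for every h' ∈ G. -/

import Mathlib

open Set Filter Topology Pointwise

/-- The space `𝒞(G)` of closed subsets of a topological space `G`. -/
structure CFClosed (G : Type*) [TopologicalSpace G] where
  carrier : Set G
  isClosed' : IsClosed carrier

namespace CFClosed

variable {G : Type*} [TopologicalSpace G]

instance : SetLike (CFClosed G) G where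
  coe := CFClosed.carrier
  coe_injective := fun P Q h => by cases P; cases Q; congr

/-- The Chabauty–Fell topology on `𝒞(G)`, generated by the subbasis consisting of
`O_K = {C | C ∩ K = ∅}` for `K` compact and `O_U = {C | C ∩ U ≠ ∅}` for `U` open. -/
instance chabautyFell : TopologicalSpace (CFClosed G) :=
  TopologicalSpace.generateFrom
    ({s | ∃ K : Set G, IsCompact K ∧ s = {C : CFClosed G | (C : Set G) ∩ K = ∅}} ∪
     {s | ∃ U : Set G, IsOpen U ∧ s = {C : CFClosed G | ((C : Set G) ∩ U).Nonempty}})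

end CFClosed
section Hulls

variable {G : Type*} [TopologicalSpace G] [Group G]

/-- The hull `Ω(Λ)` of a closed subset `Λ ⊆ G`: the closure in the Chabauty–Fell topology
of the set of left translates of `Λ`. -/
def hull (Λ : CFClosed G) : Set (CFClosed G) :=
  closure {P : CFClosed G | ∃ g : G, (P : Set G) = g • (Λ : Set G)}

/-- The discrete hull `Ω₀(Λ)`: elements of the hull containing the identity. -/
def discreteHull (Λ : CFClosed G) : Set (CFClosed G) :=
  {P ∈ hull Λ | (1 : G) ∈ P}

/-- Finite local complexity: for every compact `K ⊆ G` there is a finite collection `𝓕` of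
finite subsets of `G` such that every `P ∈ Ω₀(Λ)` satisfies `K ∩ P = h • F` for some
`h ∈ G`, `F ∈ 𝓕`. -/
def FLC (Λ : CFClosed G) : Prop :=
  ∀ K : Set G, IsCompact K → ∃ 𝓕 : Set (Set G), 𝓕.Finite ∧ (∀ F ∈ 𝓕, F.Finite) ∧
    ∀ P ∈ discreteHull Λ, ∃ h : G, ∃ F ∈ 𝓕, K ∩ (P : Set G) = h • F

end Hulls

open Pointwise in
/-- Distinct elements of the discrete hull of an FLC point set are separated by a patch:
there exist a compact `K`, a finite `F` and `h ∈ G` with `K ∩ P = hF` while `K ∩ Q ≠ h'F`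
for every `h'`. -/
theorem separating_patch (G : Type*) [TopologicalSpace G] [Group G]
    [IsTopologicalGroup G] [LocallyCompactSpace G] [SecondCountableTopology G] [T2Space G]
    (Λ : CFClosed G) (hFLC : FLC Λ) (P Q : CFClosed G) (hP : P ∈ discreteHull Λ)
    (hQ : Q ∈ discreteHull Λ) (hPQ : P ≠ Q) :
    ∃ K : Set G, IsCompact K ∧ ∃ F : Set G, F.Finite ∧ ∃ h : G,
      K ∩ (P : Set G) = h • F ∧ ∀ h' : G, K ∩ (Q : Set G) ≠ h' • F := by
  have hne : (symmDiff (P : Set G) (Q : Set G)).Nonempty := by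
    rw [Set.symmDiff_nonempty]
    exact fun h => hPQ (SetLike.coe_injective h)
  obtain ⟨x, hx⟩ := hne
  rw [Set.mem_symmDiff] at hx
  rcases hx with ⟨hxP, hxQ⟩ | ⟨hxQ, hxP⟩
  · -- x ∈ P, x ∉ Q
    obtain ⟨K, hKc, hxK, hKQ⟩ :=
      exists_compact_subset (isOpen_compl_iff.mpr Q.isClosed') hxQ
    obtain ⟨𝓕, h𝓕fin, h𝓕, hall⟩ := hFLC K hKc
    obtain ⟨h, F, hF𝓕, hKP⟩ := hall P hP
    refine ⟨K, hKc, F, h𝓕 F hF𝓕, h, hKP, ?_⟩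
    intro h' heq
    have hxKP : x ∈ K ∩ (P : Set G) := ⟨interior_subset hxK, hxP⟩
    have hFne : F.Nonempty := by
      rw [hKP] at hxKP
      exact Set.smul_set_nonempty.mp ⟨x, hxKP⟩
    have hKQempty : K ∩ (Q : Set G) = ∅ := by
      apply Set.eq_empty_of_forall_notMem
      rintro y ⟨hyK, hyQ⟩
      exact hKQ hyK hyQ
    rw [hKQempty] at heq
    exact (Set.smul_set_nonempty.mpr hFne).ne_empty heq.symm
  · -- x ∈ Q, x ∉ P
    obtain ⟨K₀, hK₀c, hxK₀, hK₀P⟩ :=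
      exists_compact_subset (isOpen_compl_iff.mpr P.isClosed') hxP
    have h1P : (1 : G) ∈ (P : Set G) := hP.2
    have h1Q : (1 : G) ∈ (Q : Set G) := hQ.2
    refine ⟨insert (1 : G) K₀, hK₀c.insert 1, {1}, Set.finite_singleton 1, 1, ?_, ?_⟩
    · ext y
      simp only [Set.mem_inter_iff, Set.mem_insert_iff, Set.smul_set_singleton,
        Set.mem_singleton_iff, smul_eq_mul, mul_one]
      constructor
      · rintro ⟨h1 | h2, hyP⟩
        · exact h1
        · exact absurd hyP (hK₀P h2)
      · rintro rfl
        exact ⟨Or.inl rfl, h1P⟩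
    · intro h' heq
      have hx1 : x ≠ (1 : G) := fun h => hxP (h ▸ h1P)
      have hxmem : x ∈ insert (1:G) K₀ ∩ (Q : Set G) :=
        ⟨Or.inr (interior_subset hxK₀), hxQ⟩
      have h1mem : (1:G) ∈ insert (1:G) K₀ ∩ (Q : Set G) := ⟨Or.inl rfl, h1Q⟩
      rw [heq, Set.smul_set_singleton, Set.mem_singleton_iff] at hxmem h1mem
      exact hx1 (hxmem.trans h1mem.symm)
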